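/- For vectors x^{k+1}, ..., x^{k+τ} and coefficients ξ_1, ..., ξ_{τ-1}, we have ‖Σ_{i=1}^{τ-1} ξ_i(x^{k+i} - x^{k+τ})‖² ≤ (τ-1) Σ_{j=1}^{τ-1} c_j ‖x^{k+j} - x^{k+j+1}‖², where c_j = Σ_{i=1}^{j} (τ - i) ξ_i². -/

import Mathlib

open Finset

/-- ‖∑ f‖² ≤ |s| ∑ ‖f‖². -/
lemma norm_sum_sq_le_card_mul {ι E : Type*} [SeminormedAddCommGroup E]
    (s : Finset ι) (f : ι → E) :
    ‖∑ i ∈ s, f i‖ ^ 2 ≤ (s.card : ℝ) * ∑ i ∈ s, ‖f i‖ ^ 2 := by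
  calc ‖∑ i ∈ s, f i‖ ^ 2 ≤ (∑ i ∈ s, ‖f i‖) ^ 2 :=
        pow_le_pow_left₀ (norm_nonneg _) (norm_sum_le s f) 2
    _ = (∑ i ∈ s, 1 * ‖f i‖) ^ 2 := by simp
    _ ≤ (∑ i ∈ s, (1:ℝ) ^ 2) * ∑ i ∈ s, ‖f i‖ ^ 2 :=
        Finset.sum_mul_sq_le_sq_mul_sq s _ _
    _ = (s.card : ℝ) * ∑ i ∈ s, ‖f i‖ ^ 2 := by simp

lemma telescope {E : Type*} [AddCommGroup E] (g : ℕ → E) {i n : ℕ} (h : i ≤ n) :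
    g i - g n = ∑ j ∈ Finset.Ico i n, (g j - g (j + 1)) := by
  rw [Finset.sum_Ico_eq_sub _ h, Finset.sum_range_sub' g, Finset.sum_range_sub' g]
  abel

/-- bound on the coupling term of multistep methods. With 0-based
indexing, ξ i stands for ξ_{i+1} and c_{j+1} = ∑_{i=1}^{j+1} (τ-i) ξ_i². -/
theorem coupling_term_bound
    {d : ℕ} (τ : ℕ) (hτ : 2 ≤ τ) (k : ℕ)
    (x : ℕ → EuclideanSpace ℝ (Fin d)) (ξ : ℕ → ℝ) :
    ‖∑ i ∈ Finset.range (τ - 1), ξ i • (x (k + i + 1) - x (k + τ))‖ ^ 2 ≤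
      ((τ : ℝ) - 1) * ∑ j ∈ Finset.range (τ - 1),
        (∑ i ∈ Finset.range (j + 1), ((τ : ℝ) - (i + 1)) * ξ i ^ 2) *
          ‖x (k + j + 1) - x (k + j + 2)‖ ^ 2 := by
  set n := τ - 1 with hn
  have hτn : τ = n + 1 := by omega
  have hc : ((τ : ℝ)) = (n : ℝ) + 1 := by rw [hτn]; push_cast; ring
  calc ‖∑ i ∈ Finset.range n, ξ i • (x (k + i + 1) - x (k + τ))‖ ^ 2
      ≤ (n : ℝ) * ∑ i ∈ Finset.range n, ‖ξ i • (x (k + i + 1) - x (k + τ))‖ ^ 2 := by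
        simpa using norm_sum_sq_le_card_mul (Finset.range n) _
    _ = (n : ℝ) * ∑ i ∈ Finset.range n, ξ i ^ 2 * ‖x (k + i + 1) - x (k + τ)‖ ^ 2 := by
        congr 1
        refine Finset.sum_congr rfl fun i _ => ?_
        rw [norm_smul, mul_pow, Real.norm_eq_abs, sq_abs]
    _ ≤ (n : ℝ) * ∑ i ∈ Finset.range n, ξ i ^ 2 *
          (((n - i : ℕ) : ℝ) * ∑ j ∈ Finset.Ico i n, ‖x (k + j + 1) - x (k + j + 2)‖ ^ 2) := by
        apply mul_le_mul_of_nonneg_left _ (by positivity)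
        refine Finset.sum_le_sum fun i hi => ?_
        apply mul_le_mul_of_nonneg_left _ (sq_nonneg _)
        have hi' : i ≤ n := (Finset.mem_range.mp hi).le
        have key : x (k + i + 1) - x (k + τ) =
            ∑ j ∈ Finset.Ico i n, (x (k + j + 1) - x (k + j + 2)) := by
          rw [hτn]
          have h := telescope (fun j => x (k + j + 1)) hi'
          rw [show k + (n + 1) = k + n + 1 by ring, h]
          refine Finset.sum_congr rfl fun j _ => ?_
          rw [show k + (j + 1) + 1 = k + j + 2 by ring]
        rw [key]
        simpa [Nat.card_Ico] using
          norm_sum_sq_le_card_mul (Finset.Ico i n) (fun j => x (k + j + 1) - x (k + j + 2))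
    _ = (n : ℝ) * ∑ i ∈ Finset.range n, ∑ j ∈ Finset.Ico i n,
          ((n : ℝ) - i) * ξ i ^ 2 * ‖x (k + j + 1) - x (k + j + 2)‖ ^ 2 := by
        congr 1
        refine Finset.sum_congr rfl fun i hi => ?_
        have hi' : i ≤ n := (Finset.mem_range.mp hi).le
        rw [Nat.cast_sub hi', ← mul_assoc, Finset.mul_sum]
        refine Finset.sum_congr rfl fun j _ => ?_
        ring
    _ = ((τ : ℝ) - 1) * ∑ j ∈ Finset.range n,
          (∑ i ∈ Finset.range (j + 1), ((τ : ℝ) - (i + 1)) * ξ i ^ 2) *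
            ‖x (k + j + 1) - x (k + j + 2)‖ ^ 2 := by
        rw [hc]
        congr 1
        · ring
        rw [Finset.range_eq_Ico, Finset.sum_Ico_Ico_comm]
        simp only [← Finset.range_eq_Ico]
        refine Finset.sum_congr rfl fun j _ => ?_
        rw [Finset.sum_mul]
        refine Finset.sum_congr rfl fun i _ => ?_
        ring
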